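/- If $d \in \mathrm{Sym}_n$ is such that $\mathrm{T}_d$ is a semistandard $\lambda$-tableau of type $(\alpha|\beta)$, then $d \in \mathscr{R} \cap \mathscr{C}$, where $\mathscr{R} = \{d : d^{-1} R_{\t_0} d \cap \mathrm{Sym}_{\alpha|\beta} \subseteq \mathrm{Sym}_{\alpha}\}$ and $\mathscr{C} = \{d : d^{-1} C_{\t_0} d \cap \mathrm{Sym}_{\alpha|\beta} \subseteq \mathrm{Sym}_{\beta}^{+|\alpha|}\}$. -/

import Mathlib

namespace SignedYoung
open Equiv Finset
open scoped Classical

abbrev Sym (n : ℕ) := Equiv.Perm (Fin n)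

/-- Index of the block of the composition `γ` containing position `i` (0-based). -/
def blockOf (γ : List ℕ) (i : ℕ) : ℕ :=
  (List.range γ.length).countP (fun j => decide ((γ.take (j + 1)).sum ≤ i))

/-- The Young subgroup of `Sym n` associated to the composition `γ`. -/
def youngSubgroup (n : ℕ) (γ : List ℕ) : Subgroup (Sym n) where
  carrier := {σ | ∀ i : Fin n, blockOf γ (σ i) = blockOf γ i}
  one_mem' := by intro i; simp
  mul_mem' := by
    intro a b ha hb i
    simp only [Equiv.Perm.mul_apply]
    rw [ha, hb]
  inv_mem' := by
    intro a ha i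
    have h := ha (a⁻¹ i)
    rw [show a (a⁻¹ i) = i from a.apply_symm_apply i] at h
    exact h.symm

/-- The subgroup `Sym_α` of the Young subgroup `Sym_{α|β}`: block-preserving permutations
fixing all points `≥ |α|`. -/
def symA (n : ℕ) (α β : List ℕ) : Set (Sym n) :=
  {σ | σ ∈ youngSubgroup n (α ++ β) ∧ ∀ i : Fin n, α.sum ≤ (i : ℕ) → σ i = i}

/-- The subgroup `Sym_β^{+|α|}`: block-preserving permutations fixing all points `< |α|`. -/
def symB (n : ℕ) (α β : List ℕ) : Set (Sym n) :=
  {σ | σ ∈ youngSubgroup n (α ++ β) ∧ ∀ i : Fin n, (i : ℕ) < α.sum → σ i = i}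

/-- Cells of the Young diagram of the composition `lam`. -/
abbrev Cell (lam : List ℕ) := (i : Fin lam.length) × Fin (lam.get i)

/-- A `lam`-tableau: a bijective labelling of the cells by `1, …, n` (here `Fin n`). -/
abbrev Tab (n : ℕ) (lam : List ℕ) := Cell lam ≃ Fin n

/-- The row stabilizer of a tableau. -/
def rowStab {n : ℕ} {lam : List ℕ} (t : Tab n lam) : Set (Sym n) :=
  {σ | ∀ a : Fin n, (t.symm (σ a)).1 = (t.symm a).1}

/-- The column stabilizer of a tableau. -/
def colStab {n : ℕ} {lam : List ℕ} (t : Tab n lam) : Set (Sym n) :=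
  {σ | ∀ a : Fin n, ((t.symm (σ a)).2 : ℕ) = ((t.symm a).2 : ℕ)}

/-- Colours `c_1 < c_2 < ⋯ < d_1 < d_2 < ⋯` (0-based). -/
abbrev Colour := Lex (ℕ ⊕ ℕ)

def cCol (k : ℕ) : Colour := toLex (Sum.inl k)

def dCol (k : ℕ) : Colour := toLex (Sum.inr k)

/-- `T` is a `lam`-tableau of type `(α|β)`: exactly `α_k` cells of colour `c_k` and
`β_k` of colour `d_k`. -/
def HasType {lam : List ℕ} (α β : List ℕ) (T : Cell lam → Colour) : Prop :=
  (∀ k : ℕ, (Finset.univ.filter fun c => T c = cCol k).card = α.getD k 0) ∧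
  (∀ k : ℕ, (Finset.univ.filter fun c => T c = dCol k).card = β.getD k 0)

/-- The colour of the number `i` under the canonical colouring by `(α|β)`. -/
def colourOfIdx (α β : List ℕ) (i : ℕ) : Colour :=
  if blockOf (α ++ β) i < α.length then cCol (blockOf (α ++ β) i)
  else dCol (blockOf (α ++ β) i - α.length)

/-- The canonical `lam`-tableau of type `(α|β)` associated to the tableau `t0`. -/
def canonT {n : ℕ} {lam : List ℕ} (t0 : Tab n lam) (α β : List ℕ) : Cell lam → Colour :=
  fun c => colourOfIdx α β (t0 c)

/-- The action `σ · T = T ∘ t0⁻¹ ∘ σ⁻¹ ∘ t0` of `Sym n` on tableaux of type `(α|β)`,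
through the fixed tableau `t0`. -/
def actT {n : ℕ} {lam : List ℕ} (t0 : Tab n lam) (σ : Sym n) (T : Cell lam → Colour) :
    Cell lam → Colour :=
  fun c => T (t0.symm (σ⁻¹ (t0 c)))

/-- `T_d = d · T_0`. -/
def TOf {n : ℕ} {lam : List ℕ} (t0 : Tab n lam) (α β : List ℕ) (d : Sym n) :
    Cell lam → Colour :=
  actT t0 d (canonT t0 α β)

def RowSemistd {lam : List ℕ} (T : Cell lam → Colour) : Prop :=
  ∀ c c' : Cell lam, c.1 = c'.1 → (c.2 : ℕ) < (c'.2 : ℕ) → T c ≤ T c'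

def ColSemistd {lam : List ℕ} (T : Cell lam → Colour) : Prop :=
  ∀ c c' : Cell lam, (c.2 : ℕ) = (c'.2 : ℕ) → c.1 < c'.1 → T c ≤ T c'

/-- Repeats in a row occur only for colours `c_k`. -/
def RowRepeatC {lam : List ℕ} (T : Cell lam → Colour) : Prop :=
  ∀ c c' : Cell lam, c.1 = c'.1 → (c.2 : ℕ) ≠ (c'.2 : ℕ) → T c = T c' → ∃ k, T c = cCol k

/-- Repeats in a column occur only for colours `d_k`. -/
def ColRepeatD {lam : List ℕ} (T : Cell lam → Colour) : Prop :=
  ∀ c c' : Cell lam, (c.2 : ℕ) = (c'.2 : ℕ) → c.1 ≠ c'.1 → T c = T c' → ∃ k, T c = dCol k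

def IsSemistd {lam : List ℕ} (T : Cell lam → Colour) : Prop :=
  RowSemistd T ∧ ColSemistd T ∧ RowRepeatC T ∧ ColRepeatD T

/-- A standard tableau: strictly increasing along rows and down columns. -/
def IsStd {n : ℕ} {lam : List ℕ} (t : Tab n lam) : Prop :=
  (∀ c c' : Cell lam, c.1 = c'.1 → (c.2 : ℕ) < (c'.2 : ℕ) → t c < t c') ∧
  (∀ c c' : Cell lam, (c.2 : ℕ) = (c'.2 : ℕ) → c.1 < c'.1 → t c < t c')

def IsPartition (n : ℕ) (lam : List ℕ) : Prop :=
  lam.Pairwise (· ≥ ·) ∧ (∀ x ∈ lam, 0 < x) ∧ lam.sum = n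

def IsBicomp (n : ℕ) (α β : List ℕ) : Prop :=
  (∀ x ∈ α, 0 < x) ∧ (∀ x ∈ β, 0 < x) ∧ α.sum + β.sum = n

/-- `𝒮 = {d : d⁻¹ R_{t0} d ∩ Sym_{α|β} ⊆ Sym_α}`. -/
def RSet {n : ℕ} {lam : List ℕ} (t0 : Tab n lam) (α β : List ℕ) : Set (Sym n) :=
  {d | ∀ σ ∈ rowStab t0, d⁻¹ * σ * d ∈ youngSubgroup n (α ++ β) →
    d⁻¹ * σ * d ∈ symA n α β}

/-- `𝒞 = {d : d⁻¹ C_{t0} d ∩ Sym_{α|β} ⊆ Sym_β^{+|α|}}`. -/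
def CSet {n : ℕ} {lam : List ℕ} (t0 : Tab n lam) (α β : List ℕ) : Set (Sym n) :=
  {d | ∀ σ ∈ colStab t0, d⁻¹ * σ * d ∈ youngSubgroup n (α ++ β) →
    d⁻¹ * σ * d ∈ symB n α β}

/-- The double coset `R_{t0} x Sym_{α|β}`. -/
def dCoset {n : ℕ} {lam : List ℕ} (t0 : Tab n lam) (α β : List ℕ) (x : Sym n) :
    Set (Sym n) :=
  {ω | ∃ τ ∈ rowStab t0, ∃ ξ ∈ youngSubgroup n (α ++ β), ω = τ * x * ξ}

/-- The double coset `C_{t0} x Sym_{α|β}`. -/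
def cCoset {n : ℕ} {lam : List ℕ} (t0 : Tab n lam) (α β : List ℕ) (x : Sym n) :
    Set (Sym n) :=
  {ω | ∃ σ ∈ colStab t0, ∃ ξ ∈ youngSubgroup n (α ++ β), ω = σ * x * ξ}

/-- `ε` is the sign function `ε_𝔡` on the double coset `R_{t0} 𝔡 Sym_{α|β}`:
`ε(τ 𝔡 ξ_α ξ_β^{+|α|}) = sgn ξ_β`. -/
def IsEps {n : ℕ} {lam : List ℕ} (t0 : Tab n lam) (α β : List ℕ) (𝔡 : Sym n)
    (ε : Sym n → ℤ) : Prop :=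
  ∀ τ ∈ rowStab t0, ∀ ξa ∈ symA n α β, ∀ ξb ∈ symB n α β,
    ε (τ * 𝔡 * (ξa * ξb)) = (Equiv.Perm.sign ξb : ℤ)

/-- The coefficient `𝔞_{d,𝔡} = ∑_{σ ∈ C_{t0}, σd ∈ R_{t0} 𝔡 Sym_{α|β}} sgn(σ) ε_𝔡(σ d)`. -/
noncomputable def coeffA {n : ℕ} {lam : List ℕ} (t0 : Tab n lam) (α β : List ℕ)
    (ε : Sym n → ℤ) (d 𝔡 : Sym n) : ℤ :=
  ∑ σ : Sym n, if σ ∈ colStab t0 ∧ σ * d ∈ dCoset t0 α β 𝔡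
    then (Equiv.Perm.sign σ : ℤ) * ε (σ * d) else 0

/-- The multiset of colours in column `j` of `T`. -/
def colMul {lam : List ℕ} (T : Cell lam → Colour) (j : ℕ) : Multiset Colour :=
  (Finset.univ.filter fun c : Cell lam => (c.2 : ℕ) = j).val.map T

noncomputable def sortedCol (m : Multiset Colour) : List Colour := m.sort (· ≤ ·)

/-- Comparison of column multisets: the sorted lists agree up to position `k`, where
the first is larger. -/
def msGT (m m' : Multiset Colour) : Prop :=
  ∃ k, (∀ s, s < k → (sortedCol m).getD s (cCol 0) = (sortedCol m').getD s (cCol 0)) ∧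
    (sortedCol m').getD k (cCol 0) < (sortedCol m).getD k (cCol 0)

/-- The strict column-dominance order `T ⊳ T'`. -/
def TabGT {lam : List ℕ} (T T' : Cell lam → Colour) : Prop :=
  ∃ t, (∀ j, j < t → colMul T j = colMul T' j) ∧ msGT (colMul T t) (colMul T' t)

/-- The column-dominance pre-order `T ⊵ T'`. -/
def TabGE {lam : List ℕ} (T T' : Cell lam → Colour) : Prop :=
  (∀ j, colMul T j = colMul T' j) ∨ TabGT T T'



lemma sum_take_mono (l : List ℕ) {a b : ℕ} (h : a ≤ b) :
    (l.take a).sum ≤ (l.take b).sum := by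
  have hb : b = a + (b - a) := (Nat.add_sub_cancel' h).symm
  rw [hb, List.take_add, List.sum_append]
  exact Nat.le_add_right _ _

lemma blockOf_eq_count (γ : List ℕ) (i : ℕ) :
    blockOf γ i = Nat.count (fun j => (γ.take (j + 1)).sum ≤ i) γ.length := rfl

lemma blockOf_lt_length_iff (α β : List ℕ) (i : ℕ) :
    blockOf (α ++ β) i < α.length ↔ i < α.sum := by
  set p : ℕ → Prop := fun j => ((α ++ β).take (j + 1)).sum ≤ i with hp
  have hcount : blockOf (α ++ β) i = Nat.count p (α.length + β.length) := by
    rw [blockOf_eq_count, List.length_append]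
  constructor
  · intro h
    by_contra hi
    push_neg at hi
    have hall : ∀ j < α.length, p j := by
      intro j hj
      have h1 : ((α ++ β).take (j + 1)).sum ≤ ((α ++ β).take α.length).sum :=
        sum_take_mono _ hj
      rw [List.take_left] at h1
      exact le_trans h1 hi
    have h2 : α.length ≤ Nat.count p (α.length + β.length) := by
      calc α.length = Nat.count p α.length := (Nat.count_of_forall hall).symm
        _ ≤ _ := Nat.count_monotone p (Nat.le_add_right _ _)
    omega
  · intro hi
    by_contra h
    push_neg at h
    have hpos : 0 < α.length := by
      rcases Nat.eq_zero_or_pos α.length with h0 | h0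
      · rw [List.length_eq_zero_iff] at h0
        subst h0
        simp at hi
      · exact h0
    obtain ⟨m, hm⟩ : ∃ m, α.length = m + 1 := ⟨α.length - 1, by omega⟩
    have hpm : p m := by
      by_contra hnp
      have hnone : ∀ k, ¬ p (m + k) := by
        intro k hk
        exact hnp (le_trans (sum_take_mono _ (by omega)) hk)
      have hsplit : Nat.count p (α.length + β.length)
          = Nat.count p m + Nat.count (fun k => p (m + k)) (α.length + β.length - m) := by
        rw [← Nat.count_add]
        congr 1
        omega
      have h0 : Nat.count (fun k => p (m + k)) (α.length + β.length - m) = 0 :=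
        Nat.count_of_forall_not (fun k _ => hnone k)
      have hle := Nat.count_le (p := p) (n := m)
      omega
    have hfin : α.sum ≤ i := by
      have h1 : ((α ++ β).take (m + 1)).sum ≤ i := hpm
      rw [← hm, List.take_left] at h1
      exact h1
    omega

lemma cell_ext {lam : List ℕ} {c c' : Cell lam} (h1 : c.1 = c'.1)
    (h2 : (c.2 : ℕ) = (c'.2 : ℕ)) : c = c' := by
  obtain ⟨a, x⟩ := c
  obtain ⟨b, y⟩ := c'
  dsimp at h1 h2
  subst h1
  exact congrArg (Sigma.mk a) (Fin.ext h2)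

lemma cCol_ne_dCol (k k' : ℕ) : cCol k ≠ dCol k' := by
  simp [cCol, dCol]

/-- **Semistandard implies `ℛ ∩ 𝒞`.** If `T_d` is a semistandard `λ`-tableau of type
`(α|β)`, then `d ∈ ℛ ∩ 𝒞`. -/
theorem semistandard_mem_RSet_inter_CSet (n : ℕ) (lam : List ℕ) (hl : IsPartition n lam)
    (α β : List ℕ) (hab : IsBicomp n α β) (t0 : Tab n lam) (d : Sym n)
    (hss : IsSemistd (TOf t0 α β d)) :
    d ∈ RSet t0 α β ∩ CSet t0 α β := by
  obtain ⟨hrowss, hcolss, hrrep, hcrep⟩ := hss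
  have key : ∀ i : Fin n, TOf t0 α β d (t0.symm (d i)) = colourOfIdx α β i := by
    intro i
    simp [TOf, actT, canonT]
  constructor
  · intro σ hσ hy
    refine ⟨hy, ?_⟩
    intro i hi
    by_contra hne
    set j := (d⁻¹ * σ * d) i with hj
    have hg : d j = σ (d i) := by
      rw [hj]
      simp [Equiv.Perm.mul_apply]
    have hb : blockOf (α ++ β) (j : ℕ) = blockOf (α ++ β) (i : ℕ) := by
      have := hy i
      rw [← hj] at this
      exact this
    have hcne : t0.symm (d j) ≠ t0.symm (d i) := by
      intro h
      exact hne (d.injective (t0.symm.injective h))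
    have hrow1 : (t0.symm (d j)).1 = (t0.symm (d i)).1 := by
      rw [hg]
      exact hσ (d i)
    have hval : ((t0.symm (d j)).2 : ℕ) ≠ ((t0.symm (d i)).2 : ℕ) := by
      intro h
      exact hcne (cell_ext hrow1 h)
    have hTeq : TOf t0 α β d (t0.symm (d j)) = TOf t0 α β d (t0.symm (d i)) := by
      rw [key j, key i]
      unfold colourOfIdx
      rw [hb]
    obtain ⟨k, hk⟩ := hrrep _ _ hrow1 hval hTeq
    rw [key j] at hk
    have hblt : ¬ blockOf (α ++ β) (j : ℕ) < α.length := by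
      rw [hb, blockOf_lt_length_iff]
      omega
    rw [colourOfIdx, if_neg hblt] at hk
    exact cCol_ne_dCol _ _ hk.symm
  · intro σ hσ hy
    refine ⟨hy, ?_⟩
    intro i hi
    by_contra hne
    set j := (d⁻¹ * σ * d) i with hj
    have hg : d j = σ (d i) := by
      rw [hj]
      simp [Equiv.Perm.mul_apply]
    have hb : blockOf (α ++ β) (j : ℕ) = blockOf (α ++ β) (i : ℕ) := by
      have := hy i
      rw [← hj] at this
      exact this
    have hcne : t0.symm (d j) ≠ t0.symm (d i) := by
      intro h
      exact hne (d.injective (t0.symm.injective h))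
    have hcol1 : ((t0.symm (d j)).2 : ℕ) = ((t0.symm (d i)).2 : ℕ) := by
      rw [hg]
      exact hσ (d i)
    have hrne : (t0.symm (d j)).1 ≠ (t0.symm (d i)).1 := by
      intro h
      exact hcne (cell_ext h hcol1)
    have hTeq : TOf t0 α β d (t0.symm (d j)) = TOf t0 α β d (t0.symm (d i)) := by
      rw [key j, key i]
      unfold colourOfIdx
      rw [hb]
    obtain ⟨k, hk⟩ := hcrep _ _ hcol1 hrne hTeq
    rw [key j] at hk
    have hblt : blockOf (α ++ β) (j : ℕ) < α.length := by
      rw [hb, blockOf_lt_length_iff]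
      exact hi
    rw [colourOfIdx, if_pos hblt] at hk
    exact cCol_ne_dCol _ _ hk


end SignedYoung
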